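/- Consider the triangle with vertices 0, y₂, y₃ in ℝ^2 inscribed in a circle of radius r, with interior angles θ at 0 and φ at y₃ (so the angle at y₂ is π − θ − φ). Then the circumradius is r and the length of the longest side divided by 2 (the Čech birthtime of the 1-cycle formed by the three edges) equals r·max(sin θ, sin φ, sin(θ+φ)). Consequently the additive lifetime r·(1 − max(sin θ, sin φ, sin(θ+φ))) over all acute triangles with r ≤ 1 is maximized uniquely at θ = φ = π/3 and r = 1, with maximal value 1 − √3/2. -/

import Mathlib

open Real EuclideanGeometry

noncomputable section

local instance : Fact (Module.finrank ℝ (EuclideanSpace ℝ (Fin 2)) = 2) :=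
  ⟨finrank_euclideanSpace_fin⟩

local instance : Module.Oriented ℝ (EuclideanSpace ℝ (Fin 2)) (Fin 2) :=
  ⟨(EuclideanSpace.basisFun (Fin 2) ℝ).toBasis.orientation⟩

private lemma abs_sin_oangle {p p₁ p₂ : EuclideanSpace ℝ (Fin 2)} (hp₁ : p₁ ≠ p) (hp₂ : p₂ ≠ p) :
    |Real.Angle.sin (∡ p₁ p p₂)| = Real.sin (∠ p₁ p p₂) := by
  have hnn : 0 ≤ Real.sin (∠ p₁ p p₂) :=
    Real.sin_nonneg_of_nonneg_of_le_pi (angle_nonneg _ _ _) (angle_le_pi _ _ _)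
  rcases oangle_eq_angle_or_eq_neg_angle hp₁ hp₂ with h | h <;> rw [h]
  · rw [Real.Angle.sin_coe, abs_of_nonneg hnn]
  · rw [Real.Angle.sin_neg, Real.Angle.sin_coe, abs_neg, abs_of_nonneg hnn]

private lemma side_eq {c p₁ p₂ p₃ : EuclideanSpace ℝ (Fin 2)} {r : ℝ}
    (h₁ : dist c p₁ = r) (h₂ : dist c p₂ = r) (h₃ : dist c p₃ = r)
    (hp₁p₂ : p₁ ≠ p₂) (hp₁p₃ : p₁ ≠ p₃) (hp₂p₃ : p₂ ≠ p₃) :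
    dist p₁ p₃ = 2 * r * Real.sin (∠ p₁ p₂ p₃) := by
  have hs : ∀ q, dist c q = r → q ∈ (⟨c, r⟩ : EuclideanGeometry.Sphere (EuclideanSpace ℝ (Fin 2))) := by
    intro q hq
    simpa [EuclideanGeometry.mem_sphere, dist_comm] using hq
  have key : dist p₁ p₃ / Real.sin (∠ p₁ p₂ p₃) = 2 * r := by
    have := EuclideanGeometry.Sphere.dist_div_sin_oangle_eq_two_mul_radius
      (hs p₁ h₁) (hs p₂ h₂) (hs p₃ h₃) hp₁p₂ hp₁p₃ hp₂p₃
    rw [abs_sin_oangle hp₁p₂ hp₂p₃.symm] at this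
    exact this
  rcases eq_or_lt_of_le (Real.sin_nonneg_of_nonneg_of_le_pi (angle_nonneg p₁ p₂ p₃)
      (angle_le_pi p₁ p₂ p₃)) with hz | hz
  · exfalso
    rw [← hz, div_zero] at key
    have hr0 : r = 0 := by linarith
    have hcp₁ : c = p₁ := by rw [hr0] at h₁; exact dist_eq_zero.mp h₁
    have hcp₃ : c = p₃ := by rw [hr0] at h₃; exact dist_eq_zero.mp h₃
    exact hp₁p₃ (hcp₁ ▸ hcp₃)
  · field_simp at key
    linarith [key]

private lemma key_max (θ φ : ℝ) (hθ0 : 0 < θ) (hθ : θ < π / 2) (hφ0 : 0 < φ) (hφ : φ < π / 2)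
    (hψ0 : 0 < π - θ - φ) (hψ : π - θ - φ < π / 2) :
    Real.sqrt 3 / 2 ≤ max (max (Real.sin θ) (Real.sin φ)) (Real.sin (θ + φ)) ∧
    (max (max (Real.sin θ) (Real.sin φ)) (Real.sin (θ + φ)) = Real.sqrt 3 / 2 ↔
      θ = π / 3 ∧ φ = π / 3) := by
  have hpi : 0 < π := Real.pi_pos
  have hsψ : Real.sin (θ + φ) = Real.sin (π - θ - φ) := by
    rw [show π - θ - φ = π - (θ + φ) by ring, Real.sin_pi_sub]
  have mono : ∀ a b : ℝ, 0 ≤ a → a ≤ b → b ≤ π / 2 → Real.sin a ≤ Real.sin b := by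
    intro a b ha hab hb
    exact Real.strictMonoOn_sin.monotoneOn ⟨by linarith, by linarith⟩ ⟨by linarith, hb⟩ hab
  have smono : ∀ a b : ℝ, 0 ≤ a → a < b → b ≤ π / 2 → Real.sin a < Real.sin b := by
    intro a b ha hab hb
    exact Real.strictMonoOn_sin ⟨by linarith, by linarith⟩ ⟨by linarith, hb⟩ hab
  have h3 : π / 3 ≤ π / 2 := by linarith
  have hs3 : Real.sin (π / 3) = Real.sqrt 3 / 2 := Real.sin_pi_div_three
  constructor
  · -- one of the angles is ≥ π/3
    rcases le_or_gt (π / 3) θ with h | h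
    · calc Real.sqrt 3 / 2 ≤ Real.sin θ := hs3 ▸ mono _ _ (by positivity) h hθ.le
        _ ≤ _ := le_max_of_le_left (le_max_left _ _)
    rcases le_or_gt (π / 3) φ with h' | h'
    · calc Real.sqrt 3 / 2 ≤ Real.sin φ := hs3 ▸ mono _ _ (by positivity) h' hφ.le
        _ ≤ _ := le_max_of_le_left (le_max_right _ _)
    have h'' : π / 3 ≤ π - θ - φ := by linarith
    calc Real.sqrt 3 / 2 ≤ Real.sin (π - θ - φ) := hs3 ▸ mono _ _ (by positivity) h'' hψ.le
      _ ≤ _ := hsψ ▸ le_max_right _ _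
  · constructor
    · intro h
      have hθ3 : θ ≤ π / 3 := by
        by_contra hc
        push_neg at hc
        have := smono (π / 3) θ (by positivity) hc hθ.le
        have hle : Real.sin θ ≤ Real.sqrt 3 / 2 := h ▸ le_max_of_le_left (le_max_left _ _) |>.trans_eq rfl
        rw [hs3] at this; linarith
      have hφ3 : φ ≤ π / 3 := by
        by_contra hc
        push_neg at hc
        have := smono (π / 3) φ (by positivity) hc hφ.le
        have hle : Real.sin φ ≤ Real.sqrt 3 / 2 := h ▸ le_max_of_le_left (le_max_right _ _) |>.trans_eq rfl
        rw [hs3] at this; linarith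
      have hψ3 : π - θ - φ ≤ π / 3 := by
        by_contra hc
        push_neg at hc
        have := smono (π / 3) (π - θ - φ) (by positivity) hc hψ.le
        have hle : Real.sin (θ + φ) ≤ Real.sqrt 3 / 2 := h ▸ le_max_right _ _ |>.trans_eq rfl
        rw [hs3] at this; rw [hsψ] at hle; linarith
      constructor <;> linarith
    · rintro ⟨rfl, rfl⟩
      rw [hsψ, show π - π / 3 - π / 3 = π / 3 by ring, hs3]
      simp

theorem stmt_4 :
    -- law of sines / birthtime: half the longest side equals r·max(sin θ, sin φ, sin(θ+φ))
    (∀ (y₂ y₃ c : EuclideanSpace ℝ (Fin 2)) (r θ φ : ℝ),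
      AffineIndependent ℝ ![(0 : EuclideanSpace ℝ (Fin 2)), y₂, y₃] →
      dist c (0 : EuclideanSpace ℝ (Fin 2)) = r → dist c y₂ = r → dist c y₃ = r →
      θ = ∠ y₂ (0 : EuclideanSpace ℝ (Fin 2)) y₃ →
      φ = ∠ (0 : EuclideanSpace ℝ (Fin 2)) y₃ y₂ →
      max (max (dist (0 : EuclideanSpace ℝ (Fin 2)) y₂)
            (dist (0 : EuclideanSpace ℝ (Fin 2)) y₃)) (dist y₂ y₃) / 2
        = r * max (max (Real.sin θ) (Real.sin φ)) (Real.sin (θ + φ))) ∧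
    -- the additive lifetime over acute triangles with r ≤ 1 is uniquely maximized
    -- at θ = φ = π/3 and r = 1, with maximal value 1 - √3/2
    (∀ r θ φ : ℝ, 0 < r → r ≤ 1 →
      0 < θ → θ < π / 2 → 0 < φ → φ < π / 2 →
      0 < π - θ - φ → π - θ - φ < π / 2 →
      r * (1 - max (max (Real.sin θ) (Real.sin φ)) (Real.sin (θ + φ)))
          ≤ 1 - Real.sqrt 3 / 2 ∧
      (r * (1 - max (max (Real.sin θ) (Real.sin φ)) (Real.sin (θ + φ)))
          = 1 - Real.sqrt 3 / 2 ↔ θ = π / 3 ∧ φ = π / 3 ∧ r = 1)) := by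
  constructor
  · intro y₂ y₃ c r θ φ hind hc0 hc2 hc3 hθ hφ
    have hr : 0 ≤ r := hc0 ▸ dist_nonneg
    have h01 : (0 : EuclideanSpace ℝ (Fin 2)) ≠ y₂ := by
      simpa using hind.injective.ne (show (0 : Fin 3) ≠ 1 by decide)
    have h02 : (0 : EuclideanSpace ℝ (Fin 2)) ≠ y₃ := by
      simpa using hind.injective.ne (show (0 : Fin 3) ≠ 2 by decide)
    have h12 : y₂ ≠ y₃ := by
      simpa using hind.injective.ne (show (1 : Fin 3) ≠ 2 by decide)
    -- three sides via the law of sines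
    have e1 : dist y₂ y₃ = 2 * r * Real.sin θ := by
      rw [hθ]; exact side_eq hc2 hc0 hc3 h01.symm h12 h02
    have e2 : dist (0 : EuclideanSpace ℝ (Fin 2)) y₂ = 2 * r * Real.sin φ := by
      rw [hφ]; exact side_eq hc0 hc3 hc2 h02 h01 h12.symm
    have e3 : dist (0 : EuclideanSpace ℝ (Fin 2)) y₃ = 2 * r * Real.sin (θ + φ) := by
      have hsum := EuclideanGeometry.angle_add_angle_add_angle_eq_pi
        (p₁ := y₂) (p₂ := (0 : EuclideanSpace ℝ (Fin 2))) (p₃ := y₃) h01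
      have hang : ∠ (0 : EuclideanSpace ℝ (Fin 2)) y₂ y₃ = π - θ - φ := by
        rw [hθ, hφ, ← angle_comm y₃ y₂ (0 : EuclideanSpace ℝ (Fin 2))]
        linarith
      have hside := side_eq hc0 hc2 hc3 h01 h02 h12
      rw [hside, hang, show π - θ - φ = π - (θ + φ) by ring, Real.sin_pi_sub]
    rw [e1, e2, e3, ← mul_max_of_nonneg _ _ (by linarith : (0:ℝ) ≤ 2 * r),
      ← mul_max_of_nonneg _ _ (by linarith : (0:ℝ) ≤ 2 * r),
      show max (max (Real.sin φ) (Real.sin (θ + φ))) (Real.sin θ)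
        = max (max (Real.sin θ) (Real.sin φ)) (Real.sin (θ + φ)) by
          rw [max_comm, max_assoc]]
    ring
  · intro r θ φ hr0 hr1 hθ0 hθ hφ0 hφ hψ0 hψ
    obtain ⟨hge, hiff⟩ := key_max θ φ hθ0 hθ hφ0 hφ hψ0 hψ
    set M := max (max (Real.sin θ) (Real.sin φ)) (Real.sin (θ + φ)) with hM
    have hM1 : M ≤ 1 := by
      simp only [hM, max_le_iff]
      exact ⟨⟨Real.sin_le_one θ, Real.sin_le_one φ⟩, Real.sin_le_one (θ + φ)⟩
    have hsq : Real.sqrt 3 ^ 2 = 3 := Real.sq_sqrt (by norm_num)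
    have h32 : Real.sqrt 3 < 2 := by nlinarith [Real.sqrt_nonneg 3]
    have hle : r * (1 - M) ≤ 1 - Real.sqrt 3 / 2 := by nlinarith
    refine ⟨hle, ?_, ?_⟩
    · intro h
      have hMeq : M = Real.sqrt 3 / 2 := by nlinarith
      obtain ⟨h1, h2⟩ := hiff.mp hMeq
      refine ⟨h1, h2, ?_⟩
      rw [hMeq] at h
      have : (1 : ℝ) - Real.sqrt 3 / 2 ≠ 0 := by nlinarith
      field_simp at h
      nlinarith
    · rintro ⟨rfl, rfl, rfl⟩
      rw [hiff.mpr ⟨rfl, rfl⟩]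
      ring
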